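/- In the doubled clique DG_n on n vertices (every pair joined by two parallel edges, m = n(n-1) edges total), a vertex that deletes k of its incident edges (1 ≤ k ≤ n-1, at most one per neighbor) has expected distance cost (n-1) + k/(n(n-1)-k) in the resulting multigraph, which is at least (n-1) + 1/(n(n-1)-1). Hence if edge price α ≤ 1/(n(n-1)-1), no vertex can profit by deleting edges it owns. -/

import Mathlib

open scoped BigOperators ENNReal

/-- A walk of length `n` between two vertices under step relation `r`. -/
def walkLen {V : Type*} (r : V → V → Prop) : ℕ → V → V → Prop
  | 0, u, v => u = v
  | (n+1), u, v => ∃ w, r u w ∧ walkLen r n w v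

/-- Adjacency in a multigraph given by a multiset of (undirected) edges. -/
def mAdj {V : Type*} (m : Multiset (Sym2 V)) (u v : V) : Prop := s(u, v) ∈ m

/-- Hop-count distance (possibly infinite) in a multigraph. -/
noncomputable def medist {V : Type*} (m : Multiset (Sym2 V)) (u v : V) : ℕ∞ :=
  sInf ((fun n : ℕ => (n : ℕ∞)) '' {n | walkLen (mAdj m) n u v})

/-- Expected distance cost of vertex `u` under uniform random deletion of one edge. -/
noncomputable def vCost {V : Type*} [DecidableEq V] [Fintype V]
    (m : Multiset (Sym2 V)) (u : V) : ℝ :=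
  (Multiset.card m : ℝ)⁻¹ *
    (m.map (fun e => ∑ v : V, ((medist (m.erase e) u v).toNat : ℝ))).sum

/-- Total expected distance cost of a multigraph. -/
noncomputable def tCost {V : Type*} [DecidableEq V] [Fintype V]
    (m : Multiset (Sym2 V)) : ℝ := ∑ u : V, vCost m u

lemma medist_self {V : Type*} (m : Multiset (Sym2 V)) (u : V) : medist m u u = 0 :=
  le_antisymm (sInf_le ⟨0, rfl, rfl⟩) zero_le

lemma medist_eq_one {V : Type*} {m : Multiset (Sym2 V)} {u v : V} (h : u ≠ v)
    (hadj : s(u,v) ∈ m) : medist m u v = 1 := by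
  apply le_antisymm
  · exact sInf_le ⟨1, ⟨v, hadj, rfl⟩, rfl⟩
  · apply le_sInf
    rintro x ⟨j, hj, rfl⟩
    cases j with
    | zero => exact absurd hj h
    | succ j =>
      show (1:ℕ∞) ≤ ((j+1 : ℕ) : ℕ∞)
      exact_mod_cast Nat.succ_le_succ (Nat.zero_le j)

lemma medist_eq_two {V : Type*} {m : Multiset (Sym2 V)} {u v w : V} (h : u ≠ v)
    (hnadj : s(u,v) ∉ m) (h1 : s(u,w) ∈ m) (h2 : s(w,v) ∈ m) : medist m u v = 2 := by
  apply le_antisymm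
  · exact sInf_le ⟨2, ⟨w, h1, v, h2, rfl⟩, rfl⟩
  · apply le_sInf
    rintro x ⟨j, hj, rfl⟩
    match j, hj with
    | 0, hj => exact absurd hj h
    | 1, ⟨w', hw', hv⟩ =>
      have hv' : w' = v := hv
      exact absurd (hv' ▸ hw') hnadj
    | (j+2), _ =>
      show (2:ℕ∞) ≤ ((j+2 : ℕ) : ℕ∞)
      exact_mod_cast Nat.succ_le_succ (Nat.succ_le_succ (Nat.zero_le j))

/-- In the doubled clique `DG_n` (`n ≥ 3`) where a vertex `u` has deleted `k` of its
incident edges (`1 ≤ k ≤ n - 1`, at most one per neighbor, so `u` has single edges to the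
`k` neighbors in `S` and double edges to all others, and all other pairs are doubled),
the expected distance cost of `u` is `(n-1) + k/(n(n-1)-k)`, which is at least
`(n-1) + 1/(n(n-1)-1)`; hence if `0 ≤ α ≤ 1/(n(n-1)-1)`, the edge-cost saving `α·k` does
not exceed the increase `k/(n(n-1)-k)` in expected distance cost. -/
theorem vCost_DGn_after_deletions {n k : ℕ} (hn : 3 ≤ n) (u : Fin n)
    (S : Finset (Fin n)) (huS : u ∉ S) (hScard : S.card = k)
    (hk1 : 1 ≤ k) (hk2 : k ≤ n - 1)
    (m : Multiset (Sym2 (Fin n)))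
    (hdiag : ∀ p : Sym2 (Fin n), p.IsDiag → m.count p = 0)
    (hsingle : ∀ v ∈ S, m.count s(u, v) = 1)
    (hdouble : ∀ v : Fin n, v ≠ u → v ∉ S → m.count s(u, v) = 2)
    (hrest : ∀ v w : Fin n, v ≠ u → w ≠ u → v ≠ w → m.count s(v, w) = 2) :
    vCost m u = (n - 1 : ℝ) + (k : ℝ) / ((n * (n - 1) : ℕ) - (k : ℝ)) ∧
    (n - 1 : ℝ) + 1 / ((n * (n - 1) : ℕ) - (1 : ℝ)) ≤ vCost m u ∧
    (∀ α : ℝ, 0 ≤ α → α ≤ 1 / ((n * (n - 1) : ℕ) - (1 : ℝ)) →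
      α * k ≤ (k : ℝ) / ((n * (n - 1) : ℕ) - (k : ℝ))) := by
  classical
  set D : Finset (Sym2 (Fin n)) := S.image (fun v => s(u, v)) with hDdef
  have hmemD : ∀ p : Sym2 (Fin n), p ∈ D ↔ ∃ a ∈ S, s(u, a) = p := by
    intro p; simp [hDdef]
  -- count formula
  have hcount : ∀ p : Sym2 (Fin n),
      m.count p = if p.IsDiag then 0 else if p ∈ D then 1 else 2 := by
    intro p
    induction p using Sym2.inductionOn with
    | hf v w =>
      by_cases hvw : v = w
      · subst hvw; simp [hdiag _ (Sym2.mk_isDiag_iff.mpr rfl)]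
      · rw [if_neg (fun h => hvw (Sym2.mk_isDiag_iff.mp h))]
        by_cases hv : v = u
        · subst hv
          by_cases hw : w ∈ S
          · rw [if_pos ((hmemD _).mpr ⟨w, hw, rfl⟩)]
            exact hsingle w hw
          · rw [if_neg]
            · exact hdouble w (fun h => hvw h.symm) hw
            · rw [hmemD]; rintro ⟨a, ha, hae⟩
              rcases Sym2.eq_iff.mp hae with ⟨-, h2⟩ | ⟨-, h2⟩
              · exact hw (h2 ▸ ha)
              · exact huS (h2 ▸ ha)
        · by_cases hw : w = u
          · subst hw
            rw [Sym2.eq_swap]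
            by_cases hv' : v ∈ S
            · rw [if_pos ((hmemD _).mpr ⟨v, hv', rfl⟩)]
              exact hsingle v hv'
            · rw [if_neg]
              · exact hdouble v hv hv'
              · rw [hmemD]; rintro ⟨a, ha, hae⟩
                rcases Sym2.eq_iff.mp hae with ⟨-, h2⟩ | ⟨-, h2⟩
                · exact hv' (h2 ▸ ha)
                · exact huS (h2 ▸ ha)
          · rw [if_neg]
            · exact hrest v w hv hw hvw
            · rw [hmemD]; rintro ⟨a, ha, hae⟩
              rcases Sym2.eq_iff.mp hae with ⟨h1, -⟩ | ⟨h1, -⟩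
              · exact hv h1.symm
              · exact hw h1.symm
  have hDne : ∀ a ∈ S, a ≠ u := fun a ha h => huS (h ▸ ha)
  have hDcard : D.card = k := by
    rw [hDdef, Finset.card_image_of_injOn, hScard]
    intro a ha b hb hab
    rcases Sym2.eq_iff.mp hab with ⟨-, h⟩ | ⟨h1, h2⟩
    · exact h
    · exact h2.trans h1
  -- cardinality of m
  have hchoose : 2 * Nat.choose n 2 = n * (n - 1) := by
    obtain ⟨a, rfl⟩ : ∃ a, n = a + 1 := ⟨n - 1, by omega⟩
    rw [Nat.choose_two_right]
    have he : 2 ∣ (a + 1) * a := by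
      rw [mul_comm]; exact (Nat.even_mul_succ_self a).two_dvd
    simpa using Nat.mul_div_cancel' he
  have hcardm : Multiset.card m + k = n * (n - 1) := by
    have h1 : Multiset.card m = ∑ p : Sym2 (Fin n), m.count p :=
      (Multiset.sum_count_eq_card (fun a _ => Finset.mem_univ a)).symm
    have h2 : (∑ p : Sym2 (Fin n), if p ∈ D then 1 else 0) = k := by
      rw [Finset.sum_ite_mem, Finset.univ_inter, Finset.sum_const, hDcard, smul_eq_mul, mul_one]
    have h3 : (∑ p : Sym2 (Fin n), if p.IsDiag then 0 else 2) = n * (n - 1) := by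
      rw [Finset.sum_ite, Finset.sum_const, Finset.sum_const, smul_eq_mul, smul_eq_mul,
        mul_zero, zero_add]
      have : (Finset.univ.filter fun p : Sym2 (Fin n) => ¬p.IsDiag).card = Nat.choose n 2 := by
        rw [← Fintype.card_subtype, Sym2.card_subtype_not_diag, Fintype.card_fin]
      rw [this, mul_comm, hchoose]
    calc Multiset.card m + k
        = (∑ p : Sym2 (Fin n), m.count p) + ∑ p : Sym2 (Fin n), if p ∈ D then 1 else 0 := by
          rw [h1, h2]
      _ = ∑ p : Sym2 (Fin n), (m.count p + if p ∈ D then 1 else 0) := by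
          rw [Finset.sum_add_distrib]
      _ = ∑ p : Sym2 (Fin n), if p.IsDiag then 0 else 2 := by
          apply Finset.sum_congr rfl
          intro p _
          rw [hcount p]
          by_cases hd : p.IsDiag
          · rw [if_pos hd, if_pos hd, if_neg, add_zero]
            rw [hmemD]; rintro ⟨a, ha, rfl⟩
            exact hDne a ha (Sym2.mk_isDiag_iff.mp hd).symm
          · rw [if_neg hd, if_neg hd]
            by_cases hp : p ∈ D <;> simp [hp]
      _ = n * (n - 1) := h3
    -- basic numeric facts
  have hmul2 : 2 * (n - 1) ≤ n * (n - 1) := Nat.mul_le_mul_right _ (by omega)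
  have hkM : k < n * (n - 1) := by omega
  have hcardpos : 0 < Multiset.card m := by omega
  -- a vertex different from u and any given v₀
  have hthird : ∀ v₀ : Fin n, ∃ w : Fin n, w ≠ u ∧ w ≠ v₀ := by
    intro v₀
    by_contra h
    push_neg at h
    have hsub : (Finset.univ : Finset (Fin n)) ⊆ {u, v₀} := by
      intro w _
      by_cases hw : w = u
      · simp [hw]
      · simp [h w hw]
    have := Finset.card_le_card hsub
    have h2 : ({u, v₀} : Finset (Fin n)).card ≤ 2 := Finset.card_insert_le _ _ |>.trans (by simp)
    simp [Finset.card_univ] at this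
    omega
  -- count of an edge incident to u
  have hucount : ∀ v : Fin n, v ≠ u → 1 ≤ m.count s(u, v) := by
    intro v hv
    by_cases hvS : v ∈ S
    · rw [hsingle v hvS]
    · rw [hdouble v hv hvS]; omega
  -- the inner distance sums
  have hinner : ∀ e ∈ m, (∑ v : Fin n, ((medist (m.erase e) u v).toNat : ℝ))
      = if e ∈ D then (n : ℝ) else ((n : ℝ) - 1) := by
    intro e he
    by_cases heD : e ∈ D
    · obtain ⟨v₀, hv₀S, hev₀⟩ := (hmemD e).mp heD
      have hv₀u : v₀ ≠ u := hDne v₀ hv₀S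
      obtain ⟨w, hwu, hwv₀⟩ := hthird v₀
      have hcnt1 : m.count s(u, v₀) = 1 := hsingle v₀ hv₀S
      have hne : s(u, v₀) ∉ m.erase e := by
        have h1 : m.count e = 1 := hev₀ ▸ hcnt1
        rw [← Multiset.count_pos, hev₀, Multiset.count_erase_self, h1]
        simp
      have huw : s(u, w) ∈ m.erase e := by
        rw [← Multiset.count_pos, Multiset.count_erase_of_ne, ]
        · exact hucount w hwu
        · rw [← hev₀]
          intro hh
          rcases Sym2.eq_iff.mp hh with ⟨-, h2⟩ | ⟨h1, -⟩
          · exact hwv₀ h2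
          · exact hv₀u h1.symm
      have hwv : s(w, v₀) ∈ m.erase e := by
        rw [← Multiset.count_pos, Multiset.count_erase_of_ne, hrest w v₀ hwu hv₀u hwv₀]
        · omega
        · rw [← hev₀]
          intro hh
          rcases Sym2.eq_iff.mp hh with ⟨h1, -⟩ | ⟨-, h2⟩
          · exact hwu h1
          · exact hv₀u h2
      have hval : ∀ v : Fin n, ((medist (m.erase e) u v).toNat : ℝ)
          = 1 + (if v = v₀ then (1:ℝ) else 0) - (if v = u then (1:ℝ) else 0) := by
        intro v
        by_cases hvu : v = u
        · subst hvu
          rw [medist_self, if_neg (fun hh => hv₀u hh.symm), if_pos rfl]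
          simp
        · by_cases hvv : v = v₀
          · subst hvv
            rw [medist_eq_two (fun hh => hvu hh.symm) hne huw hwv, if_pos rfl, if_neg hvu]
            norm_num
          · have hadj : s(u, v) ∈ m.erase e := by
              rw [← Multiset.count_pos, Multiset.count_erase_of_ne]
              · exact hucount v hvu
              · rw [← hev₀]
                intro hh
                rcases Sym2.eq_iff.mp hh with ⟨-, h2⟩ | ⟨h1, -⟩
                · exact hvv h2
                · exact hv₀u h1.symm
            rw [medist_eq_one (fun hh => hvu hh.symm) hadj, if_neg hvv, if_neg hvu]
            norm_num
      rw [if_pos heD]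
      rw [Finset.sum_congr rfl (fun v _ => hval v)]
      simp [Finset.sum_add_distrib, Finset.sum_sub_distrib, Finset.card_univ]
    · have hval : ∀ v : Fin n, ((medist (m.erase e) u v).toNat : ℝ)
          = 1 - (if v = u then (1:ℝ) else 0) := by
        intro v
        by_cases hvu : v = u
        · subst hvu; rw [medist_self, if_pos rfl]; simp
        · have hadj : s(u, v) ∈ m.erase e := by
            rw [← Multiset.count_pos]
            by_cases hee : s(u, v) = e
            · have hvS : v ∉ S := by
                intro hvS
                exact heD ((hmemD e).mpr ⟨v, hvS, hee⟩)
              rw [← hee, Multiset.count_erase_self, hdouble v hvu hvS]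
              norm_num
            · rw [Multiset.count_erase_of_ne hee]
              exact hucount v hvu
          rw [medist_eq_one (fun hh => hvu hh.symm) hadj, if_neg hvu]
          norm_num
      rw [if_neg heD]
      rw [Finset.sum_congr rfl (fun v _ => hval v)]
      simp [Finset.sum_sub_distrib, Finset.card_univ]
  -- card of the filtered multiset
  have hfiltk : Multiset.card (m.filter (· ∈ D)) = k := by
    rw [← Multiset.sum_count_eq_card (s := Finset.univ) (fun a _ => Finset.mem_univ a)]
    have : ∀ p : Sym2 (Fin n), (m.filter (· ∈ D)).count p = if p ∈ D then 1 else 0 := by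
      intro p
      rw [Multiset.count_filter]
      by_cases hp : p ∈ D
      · rw [if_pos hp, if_pos hp, hcount p, if_pos hp, if_neg]
        obtain ⟨a, ha, hap⟩ := (hmemD p).mp hp
        rw [← hap]
        exact fun hd => hDne a ha (Sym2.mk_isDiag_iff.mp hd).symm
      · rw [if_neg hp, if_neg hp]
    rw [Finset.sum_congr rfl (fun p _ => this p), Finset.sum_ite_mem, Finset.univ_inter,
      Finset.sum_const, hDcard, smul_eq_mul, mul_one]
  -- evaluate the map-sum
  have hmapsum : (m.map (fun e => ∑ v : Fin n, ((medist (m.erase e) u v).toNat : ℝ))).sum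
      = (Multiset.card m : ℝ) * ((n : ℝ) - 1) + (k : ℝ) := by
    rw [Multiset.map_congr rfl hinner]
    have hstep : ∀ e ∈ m, (if e ∈ D then (n : ℝ) else ((n : ℝ) - 1))
        = ((n : ℝ) - 1) + (if e ∈ D then (1:ℝ) else 0) := by
      intro e _
      by_cases hp : e ∈ D <;> simp [hp]
    rw [Multiset.map_congr rfl hstep, Multiset.sum_map_add]
    congr 1
    · rw [Multiset.map_const', Multiset.sum_replicate, nsmul_eq_mul]
    · conv_lhs => rw [← Multiset.filter_add_not (· ∈ D) m]
      rw [Multiset.map_add, Multiset.sum_add]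
      have e1 : ((m.filter (· ∈ D)).map (fun e => if e ∈ D then (1:ℝ) else 0)).sum
          = ((m.filter (· ∈ D)).map (fun _ => (1:ℝ))).sum := by
        rw [Multiset.map_congr rfl]
        intro e hee
        rw [if_pos (Multiset.of_mem_filter hee)]
      have e2 : ((m.filter (fun e => ¬ e ∈ D)).map (fun e => if e ∈ D then (1:ℝ) else 0)).sum
          = 0 := by
        rw [Multiset.sum_eq_zero]
        intro x hx
        obtain ⟨e, hee, rfl⟩ := Multiset.mem_map.mp hx
        rw [if_neg (Multiset.mem_filter.mp hee).2]
      rw [e1, e2, add_zero, Multiset.map_const', Multiset.sum_replicate, hfiltk,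
        nsmul_eq_mul, mul_one]
  -- evaluate vCost
  have hCne : (Multiset.card m : ℝ) ≠ 0 := Nat.cast_ne_zero.mpr (by omega)
  have hvc : vCost m u = ((n : ℝ) - 1) + (k : ℝ) / (Multiset.card m : ℝ) := by
    rw [vCost, hmapsum, mul_add, ← mul_assoc, inv_mul_cancel₀ hCne, one_mul,
      inv_mul_eq_div]
  have hcast : ((n * (n - 1) : ℕ) : ℝ) - (k : ℝ) = (Multiset.card m : ℝ) := by
    have := hcardm
    push_cast [← this]
    ring
  have hMk' : (0 : ℝ) < ((n * (n - 1) : ℕ) : ℝ) - (k : ℝ) := by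
    rw [hcast]; exact_mod_cast hcardpos
  have hk1' : (1 : ℝ) ≤ (k : ℝ) := by exact_mod_cast hk1
  have hM1 : (0 : ℝ) < ((n * (n - 1) : ℕ) : ℝ) - 1 := by
    have : ((n * (n - 1) : ℕ) : ℝ) - (k : ℝ) ≤ ((n * (n - 1) : ℕ) : ℝ) - 1 := by linarith
    linarith
  have hgoal1 : vCost m u = (n - 1 : ℝ) + (k : ℝ) / (((n * (n - 1) : ℕ) : ℝ) - (k : ℝ)) := by
    rw [hvc, hcast]
  have hkey : 1 / (((n * (n - 1) : ℕ) : ℝ) - 1) ≤ (k : ℝ) / (((n * (n - 1) : ℕ) : ℝ) - (k : ℝ)) := by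
    rw [div_le_div_iff₀ hM1 hMk']
    have hMnn : (0 : ℝ) ≤ ((n * (n - 1) : ℕ) : ℝ) := Nat.cast_nonneg _
    nlinarith [mul_nonneg (sub_nonneg.mpr hk1') hMnn]
  refine ⟨hgoal1, ?_, ?_⟩
  · rw [hgoal1]
    linarith
  · intro α hα0 hα1
    have hle : α ≤ 1 / (((n * (n - 1) : ℕ) : ℝ) - (k : ℝ)) := by
      refine hα1.trans (one_div_le_one_div_of_le hMk' ?_)
      linarith
    calc α * (k : ℝ) ≤ (1 / (((n * (n - 1) : ℕ) : ℝ) - (k : ℝ))) * (k : ℝ) :=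
          mul_le_mul_of_nonneg_right hle (Nat.cast_nonneg _)
      _ = (k : ℝ) / (((n * (n - 1) : ℕ) : ℝ) - (k : ℝ)) := one_div_mul_eq_div _ _
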